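/- For every finite set M of at least 3 points in the plane in general position, there exists a finite set B of at most 2|M| points such that B is disjoint from M, the set M ∪ B is in general position, and there is no subset H ⊆ M with |H| ≥ 3 satisfying convexHull(H) ∩ (M ∪ B) = H. (In particular, M contains no k-hole with respect to M ∪ B for any k ≥ 3, so Breaker wins the one-round bichromatic Maker-Breaker game with bias 1:2.) -/

import Mathlib

open Set

/-- A set of points in the plane is in general position if no three distinct
points of it are collinear. -/
def GenPos (S : Set (ℝ × ℝ)) : Prop :=
  ∀ p ∈ S, ∀ q ∈ S, ∀ r ∈ S, p ≠ q → p ≠ r → q ≠ r →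
    ¬ Collinear ℝ ({p, q, r} : Set (ℝ × ℝ))

namespace OneRoundAux

noncomputable section

def det2 (a b : ℝ × ℝ) : ℝ := a.1 * b.2 - a.2 * b.1
def dot2 (a b : ℝ × ℝ) : ℝ := a.1 * b.1 + a.2 * b.2

lemma det2_self (a : ℝ × ℝ) : det2 a a = 0 := by simp [det2]; ring

lemma root_subsingleton {c d : ℝ} (h : ¬ (c = 0 ∧ d = 0)) :
    {t : ℝ | c + t * d = 0}.Subsingleton := by
  intro x hx y hy
  simp only [Set.mem_setOf_eq] at hx hy
  rcases eq_or_ne d 0 with hd | hd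
  · exfalso; apply h; constructor
    · simpa [hd] using hx
    · exact hd
  · have : x * d = y * d := by linarith
    exact mul_right_cancel₀ hd this

/-- both dets vanish forces degeneracy -/
lemma det2_det2_zero {a b x : ℝ × ℝ} (ha : det2 a x = 0) (hb : det2 b x = 0)
    (hx : x ≠ 0) : det2 a b = 0 := by
  have h1 : det2 a b * x.1 = det2 a x * b.1 - det2 b x * a.1 := by simp [det2]; ring
  have h2 : det2 a b * x.2 = det2 a x * b.2 - det2 b x * a.2 := by simp [det2]; ring
  rw [ha, hb] at h1 h2
  simp at h1 h2
  rcases h1 with h1 | h1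
  · exact h1
  · rcases h2 with h2 | h2
    · exact h2
    · exact absurd (Prod.ext_iff.mpr ⟨h1, h2⟩) hx

lemma exists_smul_of_det2 {v w : ℝ × ℝ} (h : det2 v w = 0) (hv : v ≠ 0) :
    ∃ k : ℝ, w = k • v := by
  simp only [det2] at h
  rcases eq_or_ne v.1 0 with h1 | h1
  · have h2 : v.2 ≠ 0 := fun h2 => hv (Prod.ext_iff.mpr ⟨h1, h2⟩)
    refine ⟨w.2 / v.2, Prod.ext_iff.mpr ⟨?_, ?_⟩⟩
    · simp only [Prod.smul_fst, smul_eq_mul]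
      rw [h1] at h ⊢
      have : v.2 * w.1 = 0 := by linarith
      have := (mul_eq_zero.mp this).resolve_left h2
      rw [this]; ring
    · simp only [Prod.smul_snd, smul_eq_mul]
      field_simp
  · refine ⟨w.1 / v.1, Prod.ext_iff.mpr ⟨?_, ?_⟩⟩
    · simp only [Prod.smul_fst, smul_eq_mul]
      field_simp
    · simp only [Prod.smul_snd, smul_eq_mul]
      field_simp
      nlinarith [h]

lemma collinear_of_det2 {p q r : ℝ × ℝ} (h : det2 (q - p) (r - p) = 0) :
    Collinear ℝ ({p, q, r} : Set (ℝ × ℝ)) := by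
  rcases eq_or_ne q p with hq | hq
  · have : ({p, q, r} : Set (ℝ × ℝ)) = {p, r} := by rw [hq]; simp
    rw [this]; exact collinear_pair ℝ p r
  · have hv : q - p ≠ 0 := sub_ne_zero.mpr hq
    obtain ⟨k, hk⟩ := exists_smul_of_det2 h hv
    rw [collinear_iff_of_mem (Set.mem_insert p {q, r})]
    refine ⟨q - p, ?_⟩
    intro x hx
    rcases hx with hx | hx | hx
    · exact ⟨0, by simp [hx]⟩
    · refine ⟨1, ?_⟩; rw [hx, vadd_eq_add, one_smul]; abel
    · simp only [Set.mem_singleton_iff] at hx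
      refine ⟨k, ?_⟩
      rw [hx, vadd_eq_add, ← hk]; abel

lemma det2_of_collinear {p q r : ℝ × ℝ} (h : Collinear ℝ ({p, q, r} : Set (ℝ × ℝ))) :
    det2 (q - p) (r - p) = 0 := by
  rw [collinear_iff_of_mem (Set.mem_insert p {q, r})] at h
  obtain ⟨v, hv⟩ := h
  obtain ⟨t1, ht1⟩ := hv q (by simp)
  obtain ⟨t2, ht2⟩ := hv r (by simp)
  have hq : q - p = t1 • v := by rw [ht1, vadd_eq_add]; abel
  have hr : r - p = t2 • v := by rw [ht2, vadd_eq_add]; abel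
  rw [hq, hr]
  simp [det2]; ring

/-- Cramer decomposition in ℝ² -/
lemma decomp {a b : ℝ × ℝ} (h : det2 a b ≠ 0) (c : ℝ × ℝ) :
    c = (det2 c b / det2 a b) • a + (det2 a c / det2 a b) • b := by
  apply Prod.ext
  · simp only [Prod.fst_add, Prod.smul_fst, smul_eq_mul]
    field_simp
    simp only [det2]
    ring
  · simp only [Prod.snd_add, Prod.smul_snd, smul_eq_mul]
    field_simp
    simp only [det2]
    ring

lemma mem_hull3 {p q r x : ℝ × ℝ} {a b c : ℝ} (ha : 0 ≤ a) (hb : 0 ≤ b) (hc : 0 ≤ c)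
    (habc : a + b + c = 1) (hx : x = a • p + b • q + c • r) :
    x ∈ convexHull ℝ ({p, q, r} : Set (ℝ × ℝ)) := by
  have conv : Convex ℝ (convexHull ℝ ({p, q, r} : Set (ℝ × ℝ))) := convex_convexHull ℝ _
  have hp : p ∈ convexHull ℝ ({p, q, r} : Set (ℝ × ℝ)) := subset_convexHull ℝ _ (by simp)
  have hq : q ∈ convexHull ℝ ({p, q, r} : Set (ℝ × ℝ)) := subset_convexHull ℝ _ (by simp)
  have hr : r ∈ convexHull ℝ ({p, q, r} : Set (ℝ × ℝ)) := subset_convexHull ℝ _ (by simp)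
  rcases eq_or_ne (b + c) 0 with hbc | hbc
  · have hb0 : b = 0 := by linarith
    have hc0 : c = 0 := by linarith
    have ha1 : a = 1 := by linarith
    rw [hx, hb0, hc0, ha1]; simpa using hp
  · have hbc' : 0 < b + c := lt_of_le_of_ne (by linarith) (Ne.symm hbc)
    have hz : (b / (b + c)) • q + (c / (b + c)) • r ∈ convexHull ℝ ({p, q, r} : Set (ℝ × ℝ)) :=
      conv hq hr (by positivity) (by positivity) (by field_simp)
    have key := conv hp hz ha (le_of_lt hbc') (by linarith)
    have e1 : (b + c) * (b / (b + c)) = b := by field_simp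
    have e2 : (b + c) * (c / (b + c)) = c := by field_simp
    rw [smul_add, smul_smul, smul_smul, e1, e2, ← add_assoc, ← hx] at key
    exact key

lemma exists_pos_forall {α : Type*} (P : Finset α) (f : α → ℝ → Prop)
    (h : ∀ a ∈ P, ∃ δ > 0, ∀ x, 0 < x → x < δ → f a x) :
    ∃ δ > 0, ∀ a ∈ P, ∀ x, 0 < x → x < δ → f a x := by
  classical
  induction P using Finset.induction_on with
  | empty => exact ⟨1, one_pos, by simp⟩
  | insert a P hnotmem ih =>
    obtain ⟨δa, hδa, hfa⟩ := h a (Finset.mem_insert_self a P)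
    obtain ⟨δP, hδP, hfP⟩ := ih (fun b hb => h b (Finset.mem_insert_of_mem hb))
    refine ⟨min δa δP, lt_min hδa hδP, ?_⟩
    intro b hb x hx hxδ
    rcases Finset.mem_insert.mp hb with rfl | hb
    · exact hfa x hx (lt_of_lt_of_le hxδ (min_le_left _ _))
    · exact hfP b hb x hx (lt_of_lt_of_le hxδ (min_le_right _ _))

lemma det2_add_smul_left (x y z : ℝ × ℝ) (η : ℝ) :
    det2 (x + η • y) z = det2 x z + η * det2 y z := by
  simp [det2, Prod.fst_add, Prod.snd_add, Prod.smul_fst, Prod.smul_snd, smul_eq_mul]; ring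

lemma det2_add_smul_right (x y z : ℝ × ℝ) (η : ℝ) :
    det2 z (x + η • y) = det2 z x + η * det2 z y := by
  simp [det2, Prod.fst_add, Prod.snd_add, Prod.smul_fst, Prod.smul_snd, smul_eq_mul]; ring

lemma det2_combo (A C : ℝ × ℝ) (γ1 γ2 : ℝ) :
    det2 (γ1 • A + γ2 • C) C = γ1 * det2 A C ∧
    det2 A (γ1 • A + γ2 • C) = γ2 * det2 A C := by
  constructor <;>
  · simp [det2, Prod.fst_add, Prod.snd_add, Prod.smul_fst, Prod.smul_snd, smul_eq_mul]; ring

lemma det2_zero_left (z : ℝ × ℝ) : det2 0 z = 0 := by simp [det2]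

lemma det2_zero_right (z : ℝ × ℝ) : det2 z 0 = 0 := by simp [det2]

lemma det2_smul_right (z y : ℝ × ℝ) (t : ℝ) : det2 z (t • y) = t * det2 z y := by
  simp [det2, Prod.smul_fst, Prod.smul_snd, smul_eq_mul]; ring

lemma det2_neg_right (z y : ℝ × ℝ) : det2 z (-y) = - det2 z y := by
  simp [det2]; ring

lemma det2_shift (x y m e : ℝ × ℝ) (t : ℝ) :
    det2 (x - (m + t • e)) (y - (m + t • e)) =
      det2 (x - m) (y - m) + t * det2 e (x - y) := by
  simp [det2, Prod.fst_add, Prod.snd_add, Prod.fst_sub, Prod.snd_sub,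
    Prod.smul_fst, Prod.smul_snd, smul_eq_mul]; ring

lemma small_pos {γ K η : ℝ} (hγ : 0 < γ) (h0 : 0 < η) (h : η < γ / (|K| + 1)) :
    0 < γ + η * K := by
  have h1 : η * (|K| + 1) < γ := (lt_div_iff₀ (by positivity)).mp h
  nlinarith [mul_le_mul_of_nonneg_left (neg_abs_le K) h0.le, abs_nonneg K]

/-- The key step: insert one blocker point. -/
lemma step (S : Finset (ℝ × ℝ)) (hS : GenPos ↑S) (m : ℝ × ℝ) (hm : m ∈ S)
    (v₀ : ℝ × ℝ) (hv₀ : v₀ ≠ 0)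
    (P : Finset ((ℝ × ℝ) × (ℝ × ℝ)))
    (hP : ∀ q ∈ P, q.1 ∈ S ∧ q.2 ∈ S ∧ det2 (q.1 - m) (q.2 - m) ≠ 0 ∧
      ∃ γ1 γ2 : ℝ, 0 < γ1 ∧ 0 < γ2 ∧ v₀ = γ1 • (q.1 - m) + γ2 • (q.2 - m)) :
    ∃ b : ℝ × ℝ, b ∉ S ∧ GenPos ↑(insert b S) ∧
      ∀ q ∈ P, b ∈ convexHull ℝ ({q.1, m, q.2} : Set (ℝ × ℝ)) := by
  classical
  set w : ℝ × ℝ := (-v₀.2, v₀.1) with hw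
  have hvw : det2 v₀ w ≠ 0 := by
    have he : det2 v₀ w = v₀.1 ^ 2 + v₀.2 ^ 2 := by simp [det2, hw]; ring
    rw [he]
    have : v₀.1 ≠ 0 ∨ v₀.2 ≠ 0 := by
      by_contra hcon
      push_neg at hcon
      exact hv₀ (Prod.ext_iff.mpr ⟨hcon.1, hcon.2⟩)
    rcases this with h | h <;> positivity
  -- threshold for η
  have claim1 : ∃ δ > 0, ∀ q ∈ P, ∀ η : ℝ, 0 < η → η < δ →
      0 < det2 (v₀ + η • w) (q.2 - m) / det2 (q.1 - m) (q.2 - m) ∧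
      0 < det2 (q.1 - m) (v₀ + η • w) / det2 (q.1 - m) (q.2 - m) := by
    apply exists_pos_forall
    intro q hq
    obtain ⟨h1, h2, hD, γ1, γ2, hγ1, hγ2, hv⟩ := hP q hq
    set A := q.1 - m
    set C := q.2 - m
    have e1 : det2 v₀ C = γ1 * det2 A C := by rw [hv]; exact (det2_combo A C γ1 γ2).1
    have e2 : det2 A v₀ = γ2 * det2 A C := by rw [hv]; exact (det2_combo A C γ1 γ2).2
    refine ⟨min (γ1 / (|det2 w C / det2 A C| + 1)) (γ2 / (|det2 A w / det2 A C| + 1)),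
      lt_min (by positivity) (by positivity), ?_⟩
    intro η hη hηδ
    constructor
    · rw [det2_add_smul_left, add_div, e1, mul_div_assoc, div_self hD, mul_one, mul_div_assoc]
      exact small_pos hγ1 hη (lt_of_lt_of_le hηδ (min_le_left _ _))
    · rw [det2_add_smul_right, add_div, e2, mul_div_assoc, div_self hD, mul_one, mul_div_assoc]
      exact small_pos hγ2 hη (lt_of_lt_of_le hηδ (min_le_right _ _))
  obtain ⟨δ, hδ, hδP⟩ := claim1
  -- bad set for η
  set BadH : Set ℝ :=
    ⋃ z ∈ (↑S \ {m} : Set (ℝ × ℝ)), {η | det2 v₀ (z - m) + η * det2 w (z - m) = 0} with hBadH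
  have hBadHfin : BadH.Finite := by
    apply Set.Finite.biUnion (S.finite_toSet.subset Set.diff_subset)
    intro z hz
    apply Set.Subsingleton.finite
    apply root_subsingleton
    rintro ⟨h1, h2⟩
    have hzm : z - m ≠ 0 := sub_ne_zero.mpr hz.2
    exact hvw (det2_det2_zero h1 h2 hzm)
  obtain ⟨η, hη⟩ := ((Set.Ioo_infinite hδ).diff hBadHfin).nonempty
  obtain ⟨⟨hη0, hηδ⟩, hηBad⟩ := hη
  set e : ℝ × ℝ := v₀ + η • w with he
  have he0 : e ≠ 0 := by
    intro hcon
    have h1 : det2 v₀ e = η * det2 v₀ w := by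
      rw [he, det2_add_smul_right, det2_self]; ring
    rw [hcon, det2_zero_right] at h1
    exact mul_ne_zero (ne_of_gt hη0) hvw h1.symm
  have nonpar : ∀ z ∈ S, z ≠ m → det2 e (z - m) ≠ 0 := by
    intro z hz hzm hcon
    apply hηBad
    rw [hBadH]
    apply Set.mem_biUnion (show z ∈ (↑S \ {m} : Set (ℝ × ℝ)) from ⟨hz, hzm⟩)
    rw [Set.mem_setOf_eq, ← det2_add_smul_left, ← he]
    exact hcon
  have epos : ∀ q ∈ P, 0 < det2 e (q.2 - m) / det2 (q.1 - m) (q.2 - m) ∧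
      0 < det2 (q.1 - m) e / det2 (q.1 - m) (q.2 - m) :=
    fun q hq => hδP q hq η hη0 hηδ
  -- threshold for t
  have claim2 : ∃ ε > 0, ∀ q ∈ P, ∀ t : ℝ, 0 < t → t < ε →
      t * (det2 e (q.2 - m) / det2 (q.1 - m) (q.2 - m)) +
      t * (det2 (q.1 - m) e / det2 (q.1 - m) (q.2 - m)) < 1 := by
    apply exists_pos_forall
    intro q hq
    obtain ⟨hg1, hg2⟩ := epos q hq
    set g1 := det2 e (q.2 - m) / det2 (q.1 - m) (q.2 - m)
    set g2 := det2 (q.1 - m) e / det2 (q.1 - m) (q.2 - m)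
    refine ⟨1 / (g1 + g2), by positivity, ?_⟩
    intro t ht htδ
    have h1 : t * (g1 + g2) < 1 :=
      (lt_div_iff₀ (show (0:ℝ) < g1 + g2 by positivity)).mp htδ
    linarith [h1]
  obtain ⟨ε, hε, hεP⟩ := claim2
  -- bad set for t
  set BadT : Set ℝ :=
    ⋃ x ∈ (↑S : Set (ℝ × ℝ)), ⋃ y ∈ (↑S \ {x} : Set (ℝ × ℝ)),
      {t | det2 (x - m) (y - m) + t * det2 e (x - y) = 0} with hBadT
  have hBadTfin : BadT.Finite := by
    apply Set.Finite.biUnion S.finite_toSet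
    intro x hx
    apply Set.Finite.biUnion (S.finite_toSet.subset Set.diff_subset)
    intro y hy
    apply Set.Subsingleton.finite
    apply root_subsingleton
    rintro ⟨h1, h2⟩
    have hxy : x ≠ y := fun hc => hy.2 hc.symm
    rcases eq_or_ne x m with rfl | hxm
    · -- x = m : second coefficient nonzero
      have hym : y ≠ x := hy.2
      have : det2 e (x - y) = - det2 e (y - x) := by
        rw [show x - y = -(y - x) by abel, det2_neg_right]
      rw [this] at h2
      exact nonpar y hy.1 hym (by linarith [h2])
    · rcases eq_or_ne y m with rfl | hym
      · have : det2 e (x - y) = det2 e (x - y) := rfl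
        exact nonpar x hx hxm (by
          have h2' : det2 e (x - y) = 0 := by linarith [h2]
          exact h2')
      · -- x, y, m distinct in S : first coefficient nonzero by general position
        have hyS : y ∈ S := hy.1
        have hcol := collinear_of_det2 (p := m) (q := x) (r := y) h1
        exact hS m hm x hx y hyS (Ne.symm hxm) (Ne.symm hym) hxy hcol
  obtain ⟨t, ht⟩ := ((Set.Ioo_infinite hε).diff hBadTfin).nonempty
  obtain ⟨⟨ht0, htε⟩, htBad⟩ := ht
  set b : ℝ × ℝ := m + t • e with hb
  have hbm : b ≠ m := by
    rw [hb]
    intro hcon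
    have : t • e = 0 := by
      have := hcon
      rwa [add_eq_left] at this
    rcases smul_eq_zero.mp this with h | h
    · exact (ne_of_gt ht0) h
    · exact he0 h
  have hbS : b ∉ S := by
    intro hcon
    have h1 := nonpar b hcon hbm
    apply h1
    rw [hb, show m + t • e - m = t • e by abel, det2_smul_right, det2_self]
    ring
  have noncol : ∀ x ∈ S, ∀ y ∈ S, x ≠ y → ¬ Collinear ℝ ({b, x, y} : Set (ℝ × ℝ)) := by
    intro x hx y hy hxy hcol
    have hdet := det2_of_collinear hcol
    have hexp : det2 (x - b) (y - b) = det2 (x - m) (y - m) + t * det2 e (x - y) := by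
      rw [hb]; exact det2_shift x y m e t
    apply htBad
    rw [hBadT]
    apply Set.mem_biUnion hx
    apply Set.mem_biUnion (show y ∈ (↑S \ {x} : Set (ℝ × ℝ)) from ⟨hy, Ne.symm hxy⟩)
    rw [Set.mem_setOf_eq, ← hexp]
    exact hdet
  refine ⟨b, hbS, ?_, ?_⟩
  · -- general position of insert b S
    intro p hp q hq r hr hpq hpr hqr
    rw [Finset.coe_insert] at hp hq hr
    rw [Set.mem_insert_iff] at hp hq hr
    rcases hp with hp | hp
    · rcases hq with hq | hq
      · exact absurd (hp.trans hq.symm) hpq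
      · rcases hr with hr | hr
        · exact absurd (hp.trans hr.symm) hpr
        · rw [hp]; exact noncol q hq r hr hqr
    · rcases hq with hq | hq
      · rcases hr with hr | hr
        · exact absurd (hq.trans hr.symm) hqr
        · intro hcol
          rw [hq, Set.insert_comm] at hcol
          exact noncol p hp r hr hpr hcol
      · rcases hr with hr | hr
        · intro hcol
          have hset : ({p, q, r} : Set (ℝ × ℝ)) = {r, p, q} := by
            ext z
            simp only [Set.mem_insert_iff, Set.mem_singleton_iff]
            tauto
          rw [hset, hr] at hcol
          exact noncol p hp q hq hpq hcol
        · exact hS p hp q hq r hr hpq hpr hqr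
  · -- hull membership
    intro q hq
    obtain ⟨hq1, hq2, hD, _⟩ := hP q hq
    obtain ⟨hg1, hg2⟩ := epos q hq
    set g1 := det2 e (q.2 - m) / det2 (q.1 - m) (q.2 - m) with hg1d
    set g2 := det2 (q.1 - m) e / det2 (q.1 - m) (q.2 - m) with hg2d
    have hdec : e = g1 • (q.1 - m) + g2 • (q.2 - m) := decomp hD e
    have hsum : t * g1 + t * g2 < 1 := hεP q hq t ht0 htε
    have hxeq : b = (t * g1) • q.1 + (1 - t * g1 - t * g2) • m + (t * g2) • q.2 := by
      rw [hb, hdec]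
      apply Prod.ext_iff.mpr
      constructor <;>
      · simp only [Prod.fst_add, Prod.snd_add, Prod.fst_sub, Prod.snd_sub,
          Prod.smul_fst, Prod.smul_snd, smul_eq_mul]
        ring
    have hxeq' : b = (t * g1) • q.1 + (1 - t * g1 - t * g2) • m + (t * g2) • q.2 := hxeq
    exact mem_hull3 (by positivity) (by linarith) (by positivity) (by ring) hxeq'

lemma dot2_sub (u a b : ℝ × ℝ) : dot2 u (a - b) = dot2 u a - dot2 u b := by
  simp [dot2, Prod.fst_sub, Prod.snd_sub]; ring

lemma dot2_combo (u A C : ℝ × ℝ) (γ1 γ2 : ℝ) :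
    dot2 u (γ1 • A + γ2 • C) = γ1 * dot2 u A + γ2 * dot2 u C := by
  simp [dot2, Prod.fst_add, Prod.snd_add, Prod.smul_fst, Prod.smul_snd, smul_eq_mul]; ring

lemma neg_combo (A C : ℝ × ℝ) (γ1 γ2 : ℝ) :
    -(γ1 • A + γ2 • C) = (-γ1) • A + (-γ2) • C := by
  simp [neg_smul, neg_add]
  abel

/-- Classification of which side of `m` the direction `v` points into,
relative to the cone spanned at `m` by `p` and `r`. -/
lemma sideE {u v m p r : ℝ × ℝ} (hv : v ≠ 0) (huv : dot2 u v = 0)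
    (hD : det2 (p - m) (r - m) ≠ 0)
    (hp : dot2 u p < dot2 u m) (hr : dot2 u m < dot2 u r) :
    (∃ γ1 γ2 : ℝ, 0 < γ1 ∧ 0 < γ2 ∧ v = γ1 • (p - m) + γ2 • (r - m)) ∨
    (∃ γ1 γ2 : ℝ, 0 < γ1 ∧ 0 < γ2 ∧ -v = γ1 • (p - m) + γ2 • (r - m)) := by
  set A := p - m with hA
  set C := r - m with hC
  set γ1 := det2 v C / det2 A C with hγ1
  set γ2 := det2 A v / det2 A C with hγ2
  have hdec : v = γ1 • A + γ2 • C := decomp hD v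
  have hdA : dot2 u A < 0 := by rw [hA, dot2_sub]; linarith
  have hdC : 0 < dot2 u C := by rw [hC, dot2_sub]; linarith
  have hdot : γ1 * dot2 u A + γ2 * dot2 u C = 0 := by
    rw [← dot2_combo, ← hdec]; exact huv
  rcases lt_trichotomy γ1 0 with h | h | h
  · right
    refine ⟨-γ1, -γ2, by linarith, ?_, by rw [hdec]; exact neg_combo A C γ1 γ2⟩
    nlinarith
  · exfalso
    rw [h] at hdot
    have hγ2z : γ2 = 0 := by
      have : γ2 * dot2 u C = 0 := by linarith
      rcases mul_eq_zero.mp this with h' | h'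
      · exact h'
      · linarith
    apply hv
    rw [hdec, h, hγ2z]
    simp
  · left
    refine ⟨γ1, γ2, h, ?_, hdec⟩
    nlinarith

lemma buildB (M : Finset (ℝ × ℝ)) (hgp : GenPos ↑M) (u v : ℝ × ℝ) (hv : v ≠ 0)
    (huv : dot2 u v = 0)
    (hu : ∀ p ∈ M, ∀ q ∈ M, p ≠ q → dot2 u p ≠ dot2 u q) :
    ∀ K : Finset (ℝ × ℝ), K ⊆ M → ∃ B : Finset (ℝ × ℝ),
      B.card ≤ 2 * K.card ∧ Disjoint (↑B : Set (ℝ × ℝ)) ↑M ∧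
      GenPos ((↑M : Set (ℝ × ℝ)) ∪ ↑B) ∧
      ∀ m ∈ K, ∀ p ∈ M, ∀ r ∈ M, dot2 u p < dot2 u m → dot2 u m < dot2 u r →
        ∃ b ∈ B, b ∈ convexHull ℝ ({p, m, r} : Set (ℝ × ℝ)) := by
  classical
  intro K
  induction K using Finset.induction_on with
  | empty =>
    intro _
    refine ⟨∅, by simp, by simp, ?_, by simp⟩
    simpa using hgp
  | insert m K hmK ih =>
    intro hins
    have hmM : m ∈ M := hins (Finset.mem_insert_self m K)
    have hKM : K ⊆ M := fun x hx => hins (Finset.mem_insert_of_mem hx)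
    obtain ⟨B, hBcard, hBdisj, hBgen, hBhull⟩ := ih hKM
    set S : Finset (ℝ × ℝ) := M ∪ B with hSdef
    have hSgen : GenPos ↑S := by
      rw [hSdef, Finset.coe_union]
      exact hBgen
    have hmS : m ∈ S := Finset.mem_union_left _ hmM
    set Pall : Finset ((ℝ × ℝ) × (ℝ × ℝ)) :=
      (M ×ˢ M).filter (fun q => dot2 u q.1 < dot2 u m ∧ dot2 u m < dot2 u q.2) with hPall
    have hPfact : ∀ q ∈ Pall, q.1 ∈ M ∧ q.2 ∈ M ∧ det2 (q.1 - m) (q.2 - m) ≠ 0 ∧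
        dot2 u q.1 < dot2 u m ∧ dot2 u m < dot2 u q.2 := by
      intro q hq
      rw [hPall, Finset.mem_filter, Finset.mem_product] at hq
      obtain ⟨⟨h1, h2⟩, h3, h4⟩ := hq
      refine ⟨h1, h2, ?_, h3, h4⟩
      intro hdet
      have hcol := collinear_of_det2 (p := m) (q := q.1) (r := q.2) hdet
      have hmp : m ≠ q.1 := fun hc => absurd h3 (by rw [hc]; exact lt_irrefl _)
      have hmr : m ≠ q.2 := fun hc => absurd h4 (by rw [← hc]; exact lt_irrefl _)
      have hpr2 : q.1 ≠ q.2 := fun hc => absurd (h3.trans h4) (by rw [hc]; exact lt_irrefl _)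
      exact hgp m hmM q.1 h1 q.2 h2 hmp hmr hpr2 hcol
    set Pp : Finset ((ℝ × ℝ) × (ℝ × ℝ)) :=
      Pall.filter (fun q => ∃ γ1 γ2 : ℝ, 0 < γ1 ∧ 0 < γ2 ∧
        v = γ1 • (q.1 - m) + γ2 • (q.2 - m)) with hPp
    have hstep1 : ∀ q ∈ Pp, q.1 ∈ S ∧ q.2 ∈ S ∧ det2 (q.1 - m) (q.2 - m) ≠ 0 ∧
        ∃ γ1 γ2 : ℝ, 0 < γ1 ∧ 0 < γ2 ∧ v = γ1 • (q.1 - m) + γ2 • (q.2 - m) := by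
      intro q hq
      rw [hPp, Finset.mem_filter] at hq
      obtain ⟨h1, h2, h3, _⟩ := hPfact q hq.1
      exact ⟨Finset.mem_union_left _ h1, Finset.mem_union_left _ h2, h3, hq.2⟩
    obtain ⟨b1, hb1S, hb1gen, hb1hull⟩ := step S hSgen m hmS v hv Pp hstep1
    have hstep2 : ∀ q ∈ Pall \ Pp, q.1 ∈ insert b1 S ∧ q.2 ∈ insert b1 S ∧
        det2 (q.1 - m) (q.2 - m) ≠ 0 ∧
        ∃ γ1 γ2 : ℝ, 0 < γ1 ∧ 0 < γ2 ∧ -v = γ1 • (q.1 - m) + γ2 • (q.2 - m) := by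
      intro q hq
      rw [Finset.mem_sdiff] at hq
      obtain ⟨h1, h2, h3, h4, h5⟩ := hPfact q hq.1
      refine ⟨Finset.mem_insert_of_mem (Finset.mem_union_left _ h1),
        Finset.mem_insert_of_mem (Finset.mem_union_left _ h2), h3, ?_⟩
      rcases sideE hv huv h3 h4 h5 with hside | hside
      · exfalso
        apply hq.2
        rw [hPp, Finset.mem_filter]
        exact ⟨hq.1, hside⟩
      · exact hside
    obtain ⟨b2, hb2S, hb2gen, hb2hull⟩ := step (insert b1 S) hb1gen m
      (Finset.mem_insert_of_mem hmS) (-v) (neg_ne_zero.mpr hv) (Pall \ Pp) hstep2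
    have hb1M : b1 ∉ M := fun hc => hb1S (Finset.mem_union_left _ hc)
    have hb2M : b2 ∉ M := fun hc => hb2S (Finset.mem_insert_of_mem (Finset.mem_union_left _ hc))
    refine ⟨insert b1 (insert b2 B), ?_, ?_, ?_, ?_⟩
    · have c1 := Finset.card_insert_le b1 (insert b2 B)
      have c2 := Finset.card_insert_le b2 B
      rw [Finset.card_insert_of_notMem hmK]
      omega
    · rw [Finset.coe_insert, Finset.coe_insert]
      rw [Set.disjoint_left]
      intro a ha
      rcases ha with rfl | rfl | ha
      · exact fun hc => hb1M (by exact_mod_cast hc)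
      · exact fun hc => hb2M (by exact_mod_cast hc)
      · exact fun hc => Set.disjoint_left.mp hBdisj ha hc
    · have hsets : ((↑M : Set (ℝ × ℝ)) ∪ ↑(insert b1 (insert b2 B))) =
          ↑(insert b2 (insert b1 S)) := by
        rw [hSdef]
        simp only [Finset.coe_insert, Finset.coe_union]
        ext z
        simp only [Set.mem_union, Set.mem_insert_iff]
        tauto
      rw [hsets]
      exact hb2gen
    · intro m' hm' p hp r hr h1 h2
      rcases Finset.mem_insert.mp hm' with rfl | hm'K
      · have hqPall : (p, r) ∈ Pall := by
          rw [hPall, Finset.mem_filter, Finset.mem_product]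
          exact ⟨⟨hp, hr⟩, h1, h2⟩
        by_cases hcase : (p, r) ∈ Pp
        · exact ⟨b1, Finset.mem_insert_self _ _, hb1hull (p, r) hcase⟩
        · refine ⟨b2, Finset.mem_insert_of_mem (Finset.mem_insert_self _ _), ?_⟩
          exact hb2hull (p, r) (Finset.mem_sdiff.mpr ⟨hqPall, hcase⟩)
      · obtain ⟨b, hbB, hbhull⟩ := hBhull m' hm'K p hp r hr h1 h2
        exact ⟨b, Finset.mem_insert_of_mem (Finset.mem_insert_of_mem hbB), hbhull⟩

lemma exists_u (M : Finset (ℝ × ℝ)) :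
    ∃ θ : ℝ, ∀ p ∈ M, ∀ q ∈ M, p ≠ q → dot2 (1, θ) p ≠ dot2 (1, θ) q := by
  classical
  set Bad : Set ℝ := ⋃ p ∈ (↑M : Set (ℝ × ℝ)), ⋃ q ∈ (↑M \ {p} : Set (ℝ × ℝ)),
    {θ | (p.1 - q.1) + θ * (p.2 - q.2) = 0} with hBad
  have hfin : Bad.Finite := by
    apply Set.Finite.biUnion M.finite_toSet
    intro p hp
    apply Set.Finite.biUnion (M.finite_toSet.subset Set.diff_subset)
    intro q hq
    apply Set.Subsingleton.finite
    apply root_subsingleton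
    rintro ⟨h1, h2⟩
    apply hq.2
    exact Prod.ext_iff.mpr ⟨by linarith, by linarith⟩
  obtain ⟨θ, hθ⟩ := ((Set.Ioo_infinite (zero_lt_one)).diff hfin).nonempty
  refine ⟨θ, ?_⟩
  intro p hp q hq hpq heq
  apply hθ.2
  rw [hBad]
  apply Set.mem_biUnion (Finset.mem_coe.mpr hp)
  apply Set.mem_biUnion (show q ∈ (↑M \ {p} : Set (ℝ × ℝ)) from
    ⟨Finset.mem_coe.mpr hq, fun hc => hpq (hc.symm)⟩)
  rw [Set.mem_setOf_eq]
  simp only [dot2] at heq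
  nlinarith [heq]

end
end OneRoundAux

open OneRoundAux in
theorem one_round_breaker_bias_two (M : Finset (ℝ × ℝ)) (hM : 3 ≤ M.card)
    (hgp : GenPos ↑M) :
    ∃ B : Finset (ℝ × ℝ), B.card ≤ 2 * M.card ∧
      Disjoint (B : Set (ℝ × ℝ)) (M : Set (ℝ × ℝ)) ∧
      GenPos ((M : Set (ℝ × ℝ)) ∪ ↑B) ∧
      ¬ ∃ H : Finset (ℝ × ℝ), (H : Set (ℝ × ℝ)) ⊆ ↑M ∧ 3 ≤ H.card ∧
          convexHull ℝ (H : Set (ℝ × ℝ)) ∩ ((M : Set (ℝ × ℝ)) ∪ ↑B) = ↑H := by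
  classical
  obtain ⟨θ, hθ⟩ := exists_u M
  set u : ℝ × ℝ := (1, θ) with hu
  set v : ℝ × ℝ := (-θ, 1) with hv
  have hvne : v ≠ 0 := by
    intro hc
    have := congrArg Prod.snd hc
    simp [hv] at this
  have huv : dot2 u v = 0 := by simp [dot2, hu, hv]
  obtain ⟨B, hBcard, hBdisj, hBgen, hBhull⟩ :=
    buildB M hgp u v hvne huv hθ M (le_refl M)
  refine ⟨B, hBcard.trans (by omega), hBdisj, hBgen, ?_⟩
  rintro ⟨H, hHM, hH3, hHeq⟩
  have hHne : H.Nonempty := Finset.card_pos.mp (by omega)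
  obtain ⟨p, hpH, hpmin⟩ := H.exists_min_image (dot2 u) hHne
  obtain ⟨r, hrH, hrmax⟩ := H.exists_max_image (dot2 u) hHne
  have hmemM : ∀ x ∈ H, x ∈ M := fun x hx => Finset.mem_coe.mp (hHM (Finset.mem_coe.mpr hx))
  have hpr : p ≠ r := by
    intro hc
    obtain ⟨x, hxH, y, hyH, hxy⟩ := Finset.one_lt_card.mp (by omega : 1 < H.card)
    have hx1 : dot2 u x = dot2 u p :=
      le_antisymm (hc ▸ hrmax x hxH) (hpmin x hxH)
    have hy1 : dot2 u y = dot2 u p :=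
      le_antisymm (hc ▸ hrmax y hyH) (hpmin y hyH)
    exact hθ x (hmemM x hxH) y (hmemM y hyH) hxy (hx1.trans hy1.symm)
  have hmid : ((H.erase p).erase r).Nonempty := by
    rw [← Finset.card_pos]
    have h1 : r ∈ H.erase p := Finset.mem_erase.mpr ⟨Ne.symm hpr, hrH⟩
    rw [Finset.card_erase_of_mem h1, Finset.card_erase_of_mem hpH]
    omega
  obtain ⟨m, hm⟩ := hmid
  have hm1 := Finset.mem_erase.mp hm
  have hm2 := Finset.mem_erase.mp hm1.2
  have hmr : m ≠ r := hm1.1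
  have hmp : m ≠ p := hm2.1
  have hmH : m ∈ H := hm2.2
  have hpM : p ∈ M := hmemM p hpH
  have hrM : r ∈ M := hmemM r hrH
  have hmM : m ∈ M := hmemM m hmH
  have h1 : dot2 u p < dot2 u m :=
    lt_of_le_of_ne (hpmin m hmH) (hθ p hpM m hmM (Ne.symm hmp))
  have h2 : dot2 u m < dot2 u r :=
    lt_of_le_of_ne (hrmax m hmH) (fun hc => hθ m hmM r hrM hmr hc)
  obtain ⟨b, hbB, hbhull⟩ := hBhull m hmM p hpM r hrM h1 h2
  have hsub : ({p, m, r} : Set (ℝ × ℝ)) ⊆ (↑H : Set (ℝ × ℝ)) := by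
    intro z hz
    rcases hz with rfl | rfl | rfl
    · exact Finset.mem_coe.mpr hpH
    · exact Finset.mem_coe.mpr hmH
    · exact Finset.mem_coe.mpr hrH
  have hbH : b ∈ convexHull ℝ (↑H : Set (ℝ × ℝ)) := convexHull_mono hsub hbhull
  have hbHmem : b ∈ (↑H : Set (ℝ × ℝ)) := by
    rw [← hHeq]
    exact ⟨hbH, Or.inr (Finset.mem_coe.mpr hbB)⟩
  exact Set.disjoint_left.mp hBdisj (Finset.mem_coe.mpr hbB) (hHM hbHmem)
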